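/- Let S = (2/√7)·[[sin(π/7), cos(π/14), cos(3π/14)], [cos(π/14), −cos(3π/14), sin(π/7)], [cos(3π/14), sin(π/7), −cos(π/14)]] and define Verlinde numbers N_{abc} := ∑_{j=0}^{2} S_{aj}·S_{bj}·S_{cj} / S_{0j} for a,b,c ∈ {0,1,2} (indices starting at 0, with 0 the vacuum). Then N_{111} = 1, N_{112} = 1, N_{122} = 1, and N_{222} = 0. -/

import Mathlib

theorem verlinde_fusion_33 :
    let S : Matrix (Fin 3) (Fin 3) ℝ :=
      (2/Real.sqrt 7) • !![Real.sin (Real.pi/7), Real.cos (Real.pi/14), Real.cos (3*Real.pi/14);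
        Real.cos (Real.pi/14), -Real.cos (3*Real.pi/14), Real.sin (Real.pi/7);
        Real.cos (3*Real.pi/14), Real.sin (Real.pi/7), -Real.cos (Real.pi/14)]
    let N : Fin 3 → Fin 3 → Fin 3 → ℝ :=
      fun a b c => ∑ j : Fin 3, S a j * S b j * S c j / S 0 j
    N 1 1 1 = 1 ∧ N 1 1 2 = 1 ∧ N 1 2 2 = 1 ∧ N 2 2 2 = 0 := by
  intro S N
  have key : ∀ x y z w : ℝ, (2/Real.sqrt 7*x) * (2/Real.sqrt 7*y) * (2/Real.sqrt 7*z) / (2/Real.sqrt 7*w) = 4/7*(x*y*z/w) := by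
    intro x y z w
    have h2 : (2/Real.sqrt 7) ≠ 0 := by positivity
    rw [show (2/Real.sqrt 7*x) * (2/Real.sqrt 7*y) * (2/Real.sqrt 7*z)
        = (2/Real.sqrt 7) * ((2/Real.sqrt 7)^2 * (x*y*z)) by ring,
      mul_div_mul_left _ _ h2, div_pow, Real.sq_sqrt (by norm_num : (0:ℝ) ≤ 7), mul_div_assoc]
    norm_num
  set c : ℝ := Real.cos (Real.pi/14) with hcdef
  have hpi := Real.pi_pos
  have hcpos : 0 < c := by
    rw [hcdef]
    apply Real.cos_pos_of_mem_Ioo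
    constructor <;> [linarith; linarith]
  -- sin(π/14)² = 1 - c²
  have hss : Real.sin (Real.pi/14)^2 = 1 - c^2 := by
    rw [Real.sin_sq, hcdef]
  -- cos(π/7) = 2c² - 1
  have hc7 : Real.cos (Real.pi/7) = 2*c^2 - 1 := by
    rw [show Real.pi/7 = 2*(Real.pi/14) by ring, Real.cos_two_mul]
  -- sin(π/7) = 2 sin(π/14) c
  have hs7' : Real.sin (Real.pi/7) = 2*Real.sin (Real.pi/14)*c := by
    rw [show Real.pi/7 = 2*(Real.pi/14) by ring, Real.sin_two_mul]
  -- sin(π/14) = cos(3π/7) = 4cos(π/7)³ - 3cos(π/7)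
  have hsin : Real.sin (Real.pi/14) = 32*c^6 - 48*c^4 + 18*c^2 - 1 := by
    have h1 : Real.sin (Real.pi/14) = Real.cos (3*(Real.pi/7)) := by
      rw [← Real.cos_pi_div_two_sub]
      ring_nf
    rw [h1, Real.cos_three_mul, hc7]
    ring
  -- key polynomial relation: 64c⁶ - 112c⁴ + 56c² - 7 = 0
  have h7 : 64*c^6 - 112*c^4 + 56*c^2 - 7 = 0 := by
    have h0 : Real.cos (7*(Real.pi/14)) = 0 := by
      rw [show 7*(Real.pi/14) = Real.pi/2 by ring, Real.cos_pi_div_two]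
    rw [show 7*(Real.pi/14) = 4*(Real.pi/14) + 3*(Real.pi/14) by ring, Real.cos_add] at h0
    have hc4 : Real.cos (4*(Real.pi/14)) = 2*(2*c^2-1)^2 - 1 := by
      rw [show 4*(Real.pi/14) = 2*(2*(Real.pi/14)) by ring, Real.cos_two_mul, Real.cos_two_mul]
    have hs4 : Real.sin (4*(Real.pi/14)) = 2*(2*Real.sin (Real.pi/14)*c)*(2*c^2-1) := by
      rw [show 4*(Real.pi/14) = 2*(2*(Real.pi/14)) by ring, Real.sin_two_mul, Real.sin_two_mul,
        Real.cos_two_mul]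
    have hc3 : Real.cos (3*(Real.pi/14)) = 4*c^3 - 3*c := by
      rw [Real.cos_three_mul]
    have hs3 : Real.sin (3*(Real.pi/14)) = 3*Real.sin (Real.pi/14) - 4*Real.sin (Real.pi/14)^3 := by
      rw [Real.sin_three_mul]
    rw [hc4, hs4, hc3, hs3] at h0
    have hc0 : c ≠ 0 := ne_of_gt hcpos
    have h1 : c * (64*c^6 - 112*c^4 + 56*c^2 - 7) = 0 := by
      linear_combination h0 + 4*c*(2*c^2-1)*(8*c^2-5-4*(Real.sin (Real.pi/14)^2-1+c^2)) * hss
    exact (mul_eq_zero.mp h1).resolve_left hc0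
  have hc3eq : Real.cos (3*Real.pi/14) = 4*c^3 - 3*c := by
    rw [show 3*Real.pi/14 = 3*(Real.pi/14) by ring, Real.cos_three_mul]
  have hs7 : Real.sin (Real.pi/7) = 2*(32*c^6 - 48*c^4 + 18*c^2 - 1)*c := by
    rw [hs7', hsin]
  have haPos : 0 < 2*(32*c^6 - 48*c^4 + 18*c^2 - 1)*c := by
    rw [← hs7]
    apply Real.sin_pos_of_pos_of_lt_pi <;> linarith
  have hdPos : 0 < 4*c^3 - 3*c := by
    rw [← hc3eq]
    apply Real.cos_pos_of_mem_Ioo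
    constructor <;> [linarith; linarith]
  have ha0 : (2*(32*c^6 - 48*c^4 + 18*c^2 - 1)*c) ≠ 0 := ne_of_gt haPos
  have hd0 : (4*c^3 - 3*c) ≠ 0 := ne_of_gt hdPos
  have hc0 : c ≠ 0 := ne_of_gt hcpos
  have gen : ∀ x1 x2 x3 w1 w2 w3 r : ℝ, w1 ≠ 0 → w2 ≠ 0 → w3 ≠ 0 →
      4*(x1*w2*w3 + x2*w1*w3 + x3*w1*w2) = 7*r*(w1*w2*w3) →
      4/7*(x1/w1) + 4/7*(x2/w2) + 4/7*(x3/w3) = r := by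
    intro x1 x2 x3 w1 w2 w3 r h1 h2 h3 h
    have hw : w1*w2*w3 ≠ 0 := mul_ne_zero (mul_ne_zero h1 h2) h3
    rw [eq_comm, ← sub_eq_zero]
    have e : r - (4/7*(x1/w1) + 4/7*(x2/w2) + 4/7*(x3/w3))
        = (7*r*(w1*w2*w3) - 4*(x1*w2*w3 + x2*w1*w3 + x3*w1*w2)) / (7*(w1*w2*w3)) := by
      field_simp
    rw [e, h, sub_self, zero_div]
  refine ⟨?_, ?_, ?_, ?_⟩
  · simp only [N, S, Fin.sum_univ_three, Matrix.smul_apply, smul_eq_mul, Matrix.cons_val',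
      Matrix.cons_val_zero, Matrix.cons_val_one, Matrix.head_cons, Matrix.empty_val',
      Matrix.cons_val_fin_one, Matrix.head_fin_const, Matrix.cons_val_two, Matrix.tail_cons,
      Matrix.of_apply]
    rw [key, key, key, hc3eq, hs7, ← hcdef]
    apply gen _ _ _ _ _ _ _ ha0 hc0 hd0
    linear_combination ((6:ℝ)*c^3 + (-168:ℝ)*c^5 + (1808:ℝ)*c^7 + (-17216:ℝ)*c^9 + (186624:ℝ)*c^11 + (-1149952:ℝ)*c^13 + (3829760:ℝ)*c^15 + (-7241728:ℝ)*c^17 + (7798784:ℝ)*c^19 + (-4456448:ℝ)*c^21 + (1048576:ℝ)*c^23) * h7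
  · simp only [N, S, Fin.sum_univ_three, Matrix.smul_apply, smul_eq_mul, Matrix.cons_val',
      Matrix.cons_val_zero, Matrix.cons_val_one, Matrix.head_cons, Matrix.empty_val',
      Matrix.cons_val_fin_one, Matrix.head_fin_const, Matrix.cons_val_two, Matrix.tail_cons,
      Matrix.of_apply]
    rw [key, key, key, hc3eq, hs7, ← hcdef]
    apply gen _ _ _ _ _ _ _ ha0 hc0 hd0
    linear_combination ((6:ℝ)*c^3 + (-16:ℝ)*c^5 + (-2000:ℝ)*c^7 + (13760:ℝ)*c^9 + (-33280:ℝ)*c^11 + (33792:ℝ)*c^13 + (-12288:ℝ)*c^15) * h7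
  · simp only [N, S, Fin.sum_univ_three, Matrix.smul_apply, smul_eq_mul, Matrix.cons_val',
      Matrix.cons_val_zero, Matrix.cons_val_one, Matrix.head_cons, Matrix.empty_val',
      Matrix.cons_val_fin_one, Matrix.head_fin_const, Matrix.cons_val_two, Matrix.tail_cons,
      Matrix.of_apply]
    rw [key, key, key, hc3eq, hs7, ← hcdef]
    apply gen _ _ _ _ _ _ _ ha0 hc0 hd0
    linear_combination ((6:ℝ)*c^3 + (-96:ℝ)*c^5 + (1920:ℝ)*c^7 + (-36416:ℝ)*c^9 + (264960:ℝ)*c^11 + (-934912:ℝ)*c^13 + (1802240:ℝ)*c^15 + (-1949696:ℝ)*c^17 + (1114112:ℝ)*c^19 + (-262144:ℝ)*c^21) * h7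
  · simp only [N, S, Fin.sum_univ_three, Matrix.smul_apply, smul_eq_mul, Matrix.cons_val',
      Matrix.cons_val_zero, Matrix.cons_val_one, Matrix.head_cons, Matrix.empty_val',
      Matrix.cons_val_fin_one, Matrix.head_fin_const, Matrix.cons_val_two, Matrix.tail_cons,
      Matrix.of_apply]
    rw [key, key, key, hc3eq, hs7, ← hcdef]
    apply gen _ _ _ _ _ _ _ ha0 hc0 hd0
    linear_combination ((-20:ℝ)*c^5 + (-1904:ℝ)*c^7 + (45760:ℝ)*c^9 + (-609024:ℝ)*c^11 + (4182016:ℝ)*c^13 + (-16084992:ℝ)*c^15 + (37044224:ℝ)*c^17 + (-52363264:ℝ)*c^19 + (44564480:ℝ)*c^21 + (-20971520:ℝ)*c^23 + (4194304:ℝ)*c^25) * h7
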